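/- Let f ∈ ℍ[X] be monic with deg f ≥ 1. Then the snail sn(f) is a compact subset of ℍ. -/

import Mathlib

open Polynomial

open scoped RealInnerProductSpace

noncomputable section

/-- The real subalgebra `ℂ_I = ℝ·1 + ℝ·I` of `ℍ`, as an `ℝ`-submodule. -/
def CI (I : Quaternion ℝ) : Submodule ℝ (Quaternion ℝ) :=
  Submodule.span ℝ {1, I}

/-- The orthogonal projection `π_I : ℍ → ℂ_I`, viewed as a map `ℍ → ℍ`. -/
def piI (I : Quaternion ℝ) (a : Quaternion ℝ) : Quaternion ℝ :=
  ((CI I).orthogonalProjectionOnto a : Quaternion ℝ)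

/-- `f_I = ∑ₖ π_I(aₖ) Xᵏ`, the projection of the coefficients of `f` onto `ℂ_I`. -/
def polyProj (I : Quaternion ℝ) (f : Polynomial (Quaternion ℝ)) :
    Polynomial (Quaternion ℝ) :=
  f.sum fun k a => C (piI I a) * X ^ k

open scoped Classical in
/-- `K_{ℂ_I}(f_I)`: the convex hull of the roots of `f_I` in `ℂ_I` if `f_I` is
nonconstant, and all of `ℂ_I` otherwise. -/
def KSet (I : Quaternion ℝ) (f : Polynomial (Quaternion ℝ)) : Set (Quaternion ℝ) :=
  if 0 < (polyProj I f).natDegree then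
    convexHull ℝ {r : Quaternion ℝ | r ∈ CI I ∧ Polynomial.eval r (polyProj I f) = 0}
  else (CI I : Set (Quaternion ℝ))

/-- The Gauss–Lucas snail `sn(f) = ⋃_I K_{ℂ_I}(f_I)`, the union over all `I`
of trace `0` and norm `1`. -/
def snail (f : Polynomial (Quaternion ℝ)) : Set (Quaternion ℝ) :=
  ⋃ (I : Quaternion ℝ) (_ : I.re = 0 ∧ ‖I‖ = 1), KSet I f



def auxP (I a : Quaternion ℝ) : Quaternion ℝ :=
  ((a.re : ℝ) : Quaternion ℝ) - ((a * I).re) • I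

lemma coe_eq_smul_one (r : ℝ) : ((r : ℝ) : Quaternion ℝ) = r • (1 : Quaternion ℝ) := by
  rw [← Algebra.algebraMap_eq_smul_one]; rfl

lemma auxP_mem (I a : Quaternion ℝ) : auxP I a ∈ CI I := by
  apply Submodule.sub_mem
  · rw [coe_eq_smul_one]
    exact Submodule.smul_mem (CI I) _ (Submodule.subset_span (by simp))
  · exact Submodule.smul_mem _ _ (Submodule.subset_span (by simp))

lemma normSq_im (I : Quaternion ℝ) (h0 : I.re = 0) (h1 : ‖I‖ = 1) :
    I.imI^2 + I.imJ^2 + I.imK^2 = 1 := by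
  have h : Quaternion.normSq I = 1 := by
    rw [Quaternion.normSq_eq_norm_mul_self, h1]; norm_num
  rw [Quaternion.normSq_def'] at h
  nlinarith [h]

lemma piI_eq (I : Quaternion ℝ) (h0 : I.re = 0) (h1 : ‖I‖ = 1) (a : Quaternion ℝ) :
    piI I a = auxP I a := by
  have hn := normSq_im I h0 h1
  rw [piI, ← Submodule.starProjection_apply]
  apply Submodule.eq_starProjection_of_mem_of_inner_eq_zero (auxP_mem I a)
  intro w hw
  rw [CI, Submodule.mem_span_pair] at hw
  obtain ⟨m, n, rfl⟩ := hw
  rw [inner_add_right, real_inner_smul_right, real_inner_smul_right]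
  have e1 : ⟪a - auxP I a, (1:Quaternion ℝ)⟫ = 0 := by
    simp [Quaternion.inner_def, auxP, Quaternion.re_sub, Quaternion.re_smul, h0]
  have e2 : ⟪a - auxP I a, I⟫ = 0 := by
    simp only [Quaternion.inner_def, auxP]
    simp only [Quaternion.re_mul, Quaternion.re_sub, Quaternion.re_smul,
      Quaternion.imI_sub, Quaternion.imI_smul, Quaternion.imJ_sub, Quaternion.imJ_smul,
      Quaternion.imK_sub, Quaternion.imK_smul, Quaternion.re_star, Quaternion.imI_star,
      Quaternion.imJ_star, Quaternion.imK_star, Quaternion.re_coe, Quaternion.imI_coe,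
      Quaternion.imJ_coe, Quaternion.imK_coe, h0, smul_eq_mul]
    linear_combination -(a.imI * I.imI + a.imJ * I.imJ + a.imK * I.imK) * hn
  rw [e1, e2]; ring

lemma mem_CI_iff (I : Quaternion ℝ) (h0 : I.re = 0) (h1 : ‖I‖ = 1) (r : Quaternion ℝ) :
    r ∈ CI I ↔ auxP I r = r := by
  constructor
  · intro h
    rw [← piI_eq I h0 h1, piI, ← Submodule.starProjection_apply, Submodule.starProjection_eq_self_iff]
    exact h
  · intro h; rw [← h]; exact auxP_mem I r

lemma piI_zero (I : Quaternion ℝ) : piI I 0 = 0 := by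
  simp [piI]

lemma piI_one (I : Quaternion ℝ) : piI I 1 = 1 := by
  rw [piI, ← Submodule.starProjection_apply, Submodule.starProjection_eq_self_iff]
  exact Submodule.subset_span (by simp)

lemma norm_piI_le (I a : Quaternion ℝ) : ‖piI I a‖ ≤ ‖a‖ := by
  rw [piI]
  have h := Submodule.orthogonalProjectionOnto_norm_le (K := CI I)
  calc ‖((CI I).orthogonalProjectionOnto a : Quaternion ℝ)‖
      = ‖(CI I).orthogonalProjectionOnto a‖ := rfl
    _ ≤ ‖(CI I).orthogonalProjectionOnto‖ * ‖a‖ := ((CI I).orthogonalProjectionOnto).le_opNorm a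
    _ ≤ 1 * ‖a‖ := by gcongr
    _ = ‖a‖ := one_mul _


lemma coeff_polyProj (I : Quaternion ℝ) (f : Polynomial (Quaternion ℝ)) (k : ℕ) :
    (polyProj I f).coeff k = piI I (f.coeff k) := by
  rw [polyProj, Polynomial.sum_def, Polynomial.finset_sum_coeff]
  simp only [Polynomial.coeff_C_mul, Polynomial.coeff_X_pow, mul_ite, mul_one, mul_zero]
  rw [Finset.sum_ite_eq f.support k (fun j => piI I (f.coeff j))]
  by_cases h : k ∈ f.support
  · rw [if_pos h]
  · rw [if_neg h, Polynomial.notMem_support_iff.mp h, piI_zero]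

lemma eval_polyProj (I : Quaternion ℝ) (f : Polynomial (Quaternion ℝ)) (r : Quaternion ℝ) :
    Polynomial.eval r (polyProj I f) = ∑ k ∈ f.support, piI I (f.coeff k) * r ^ k := by
  rw [polyProj, Polynomial.sum_def, Polynomial.eval_finset_sum]
  refine Finset.sum_congr rfl fun k _ => ?_
  rw [Polynomial.C_mul_X_pow_eq_monomial, Polynomial.eval_monomial]

lemma natDegree_polyProj (I : Quaternion ℝ) (f : Polynomial (Quaternion ℝ))
    (hf : f.Monic) : (polyProj I f).natDegree = f.natDegree ∧ (polyProj I f).Monic := by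
  have hle : (polyProj I f).natDegree ≤ f.natDegree := by
    apply Polynomial.natDegree_le_iff_coeff_eq_zero.mpr
    intro m hm
    rw [coeff_polyProj, Polynomial.coeff_eq_zero_of_natDegree_lt hm, piI_zero]
  have hc : (polyProj I f).coeff f.natDegree = 1 := by
    rw [coeff_polyProj, hf.coeff_natDegree, piI_one]
  have hge : f.natDegree ≤ (polyProj I f).natDegree :=
    Polynomial.le_natDegree_of_ne_zero (by rw [hc]; exact one_ne_zero)
  have hdeg : (polyProj I f).natDegree = f.natDegree := le_antisymm hle hge
  exact ⟨hdeg, by rwa [Polynomial.Monic, Polynomial.leadingCoeff, hdeg]⟩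

lemma root_norm_le {D : Type*} [NormedDivisionRing D] (p : Polynomial D)
    (hp : p.Monic) (hd : 0 < p.natDegree) {r : D} (hr : Polynomial.eval r p = 0) :
    ‖r‖ ≤ 1 + ∑ k ∈ Finset.range p.natDegree, ‖p.coeff k‖ := by
  set n := p.natDegree
  set M := ∑ k ∈ Finset.range n, ‖p.coeff k‖ with hM
  have hM0 : 0 ≤ M := Finset.sum_nonneg fun _ _ => norm_nonneg _
  by_contra hcon
  push_neg at hcon
  have hr1 : 1 < ‖r‖ := by linarith
  have hev : (0 : D) = ∑ k ∈ Finset.range n, p.coeff k * r ^ k + r ^ n := by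
    rw [← hr, Polynomial.eval_eq_sum_range, Finset.sum_range_succ, hp.coeff_natDegree, one_mul]
  have heq : r ^ n = -∑ k ∈ Finset.range n, p.coeff k * r ^ k := by
    rw [eq_neg_iff_add_eq_zero, add_comm]; exact hev.symm
  have hnorm : ‖r‖ ^ n ≤ M * ‖r‖ ^ (n - 1) := by
    calc ‖r‖ ^ n = ‖r ^ n‖ := (norm_pow r n).symm
      _ = ‖∑ k ∈ Finset.range n, p.coeff k * r ^ k‖ := by rw [heq, norm_neg]
      _ ≤ ∑ k ∈ Finset.range n, ‖p.coeff k * r ^ k‖ := norm_sum_le _ _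
      _ ≤ ∑ k ∈ Finset.range n, ‖p.coeff k‖ * ‖r‖ ^ (n - 1) := by
          refine Finset.sum_le_sum fun k hk => ?_
          rw [norm_mul, norm_pow]
          refine mul_le_mul_of_nonneg_left ?_ (norm_nonneg _)
          exact pow_le_pow_right₀ (le_of_lt hr1) (Nat.le_sub_one_of_lt (Finset.mem_range.mp hk))
      _ = M * ‖r‖ ^ (n - 1) := by rw [← Finset.sum_mul]
  have hpow : ‖r‖ ^ n = ‖r‖ * ‖r‖ ^ (n - 1) := by
    conv_lhs => rw [show n = 1 + (n - 1) by omega]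
    rw [pow_add, pow_one]
  have hpos : (0 : ℝ) < ‖r‖ ^ (n - 1) := pow_pos (by linarith) _
  have : ‖r‖ ≤ M := by
    have := hnorm
    rw [hpow] at this
    exact le_of_mul_le_mul_right this hpos
  linarith

lemma sum_ite_lt {M : Type*} [AddCommMonoid M] {N m : ℕ} (hmN : m ≤ N) (G : ℕ → M) :
    (∑ j : Fin N, if (j : ℕ) < m then G (j : ℕ) else 0) = ∑ j : Fin m, G (j : ℕ) := by
  rw [Fin.sum_univ_eq_sum_range (fun j => if j < m then G j else 0) N,
    Fin.sum_univ_eq_sum_range (fun j => G j) m]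
  rw [← Finset.sum_subset (Finset.range_subset_range.mpr hmN)
    (fun j _ hjm => if_neg (by simpa using hjm))]
  exact Finset.sum_congr rfl fun j hj => if_pos (Finset.mem_range.mp hj)

lemma pad_key {M : Type*} [AddCommMonoid M] {ι : Type*} [Fintype ι] {N m : ℕ}
    (e : Fin m ≃ ι) (hmN : m ≤ N) (g : ℕ → ι) (hg : ∀ j : Fin m, g (j : ℕ) = e j)
    (F : ι → M) :
    (∑ j : Fin N, if (j : ℕ) < m then F (g (j : ℕ)) else 0) = ∑ i, F i := by
  rw [sum_ite_lt hmN (fun j => F (g j))]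
  rw [Finset.sum_congr rfl fun j _ => congrArg F (hg j)]
  exact Equiv.sum_comp e F

lemma exists_fin_convex {E : Type*} [NormedAddCommGroup E] [NormedSpace ℝ E]
    [FiniteDimensional ℝ E] {s : Set E} {x : E} {N : ℕ}
    (hN : Module.finrank ℝ E + 1 ≤ N) (hx : x ∈ convexHull ℝ s) :
    ∃ (w : Fin N → ℝ) (z : Fin N → E), (∀ j, 0 ≤ w j) ∧ (∑ j, w j) = 1 ∧
      (∀ j, z j ∈ s) ∧ (∑ j, w j • z j) = x := by
  obtain ⟨ι, hfin, z, w, hrange, hai, hpos, hsum, hcomb⟩ :=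
    eq_pos_convex_span_of_mem_convexHull hx
  letI := hfin
  have hcard : Fintype.card ι ≤ N := by
    refine le_trans hai.card_le_finrank_succ (le_trans ?_ hN)
    have := Submodule.finrank_le (vectorSpan ℝ (Set.range z))
    omega
  set m := Fintype.card ι with hm
  have hmpos : 0 < m := by
    rcases isEmpty_or_nonempty ι with h | h
    · exfalso; rw [Finset.sum_of_isEmpty] at hsum; norm_num at hsum
    · exact Fintype.card_pos
  let e : Fin m ≃ ι := (Fintype.equivFin ι).symm
  let g : ℕ → ι := fun j => e ⟨min j (m - 1),
    lt_of_le_of_lt (min_le_right _ _) (Nat.pred_lt hmpos.ne')⟩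
  have hg : ∀ j : Fin m, g (j : ℕ) = e j := by
    intro j
    show e _ = e j
    congr 1
    exact Fin.ext (Nat.min_eq_left (Nat.le_sub_one_of_lt j.isLt))
  refine ⟨fun j => if (j : ℕ) < m then w (g (j : ℕ)) else 0, fun j => z (g (j : ℕ)),
    ?_, ?_, ?_, ?_⟩
  · intro j; dsimp only; split
    · exact (hpos _).le
    · exact le_refl 0
  · rw [pad_key e hcard g hg w]; exact hsum
  · intro j; exact hrange (Set.mem_range_self _)
  · calc (∑ j : Fin N, (if (j : ℕ) < m then w (g (j : ℕ)) else 0) • z (g (j : ℕ)))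
        = ∑ j : Fin N, (if (j : ℕ) < m then w (g (j : ℕ)) • z (g (j : ℕ)) else 0) := by
          refine Finset.sum_congr rfl fun j _ => ?_
          split <;> simp
      _ = ∑ i, w i • z i := pad_key e hcard g hg (fun i => w i • z i)
      _ = x := hcomb

lemma isCompact_convexHull_fd {E : Type*} [NormedAddCommGroup E] [NormedSpace ℝ E]
    [FiniteDimensional ℝ E] {s : Set E} (hs : IsCompact s) :
    IsCompact (convexHull ℝ s) := by
  rcases s.eq_empty_or_nonempty with rfl | hne
  · simp [convexHull_empty]
  set N := Module.finrank ℝ E + 1 with hN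
  set K : Set ((Fin N → ℝ) × (Fin N → E)) :=
    (stdSimplex ℝ (Fin N)) ×ˢ (Set.univ.pi fun _ : Fin N => s) with hK
  have hKc : IsCompact K := (isCompact_stdSimplex _ _).prod (isCompact_univ_pi fun _ => hs)
  have hφ : Continuous fun q : (Fin N → ℝ) × (Fin N → E) => ∑ j, q.1 j • q.2 j := by
    refine continuous_finset_sum _ fun j _ => Continuous.smul ?_ ?_
    · exact (continuous_apply j).comp continuous_fst
    · exact (continuous_apply j).comp continuous_snd
  have himg : (fun q : (Fin N → ℝ) × (Fin N → E) => ∑ j, q.1 j • q.2 j) '' K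
      = convexHull ℝ s := by
    apply Set.Subset.antisymm
    · rintro x ⟨⟨w, z⟩, ⟨⟨hw0, hw1⟩, hz⟩, rfl⟩
      exact (convex_convexHull ℝ s).sum_mem (fun j _ => hw0 j) hw1
        (fun j _ => subset_convexHull ℝ s (hz j (Set.mem_univ j)))
    · intro x hx
      obtain ⟨w, z, hw0, hw1, hz, hcomb⟩ := exists_fin_convex (le_refl N) hx
      exact ⟨⟨w, z⟩, ⟨⟨hw0, hw1⟩, fun j _ => hz j⟩, hcomb⟩ -- fix membership

  rw [← himg]
  exact hKc.image hφ


def evalAux (f : Polynomial (Quaternion ℝ)) (I r : Quaternion ℝ) : Quaternion ℝ :=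
  ∑ k ∈ f.support, auxP I (f.coeff k) * r ^ k

lemma evalAux_eq (f : Polynomial (Quaternion ℝ)) {I : Quaternion ℝ}
    (h0 : I.re = 0) (h1 : ‖I‖ = 1) (r : Quaternion ℝ) :
    evalAux f I r = Polynomial.eval r (polyProj I f) := by
  rw [eval_polyProj, evalAux]
  exact Finset.sum_congr rfl fun k _ => by rw [piI_eq I h0 h1]

def Zset (f : Polynomial (Quaternion ℝ)) : Set (Quaternion ℝ × Quaternion ℝ) :=
  {p | p.1.re = 0 ∧ ‖p.1‖ = 1 ∧ auxP p.1 p.2 = p.2 ∧ evalAux f p.1 p.2 = 0}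

lemma isClosed_Zset (f : Polynomial (Quaternion ℝ)) : IsClosed (Zset f) := by
  have c1 : IsClosed {p : Quaternion ℝ × Quaternion ℝ | p.1.re = 0} :=
    isClosed_eq (Quaternion.continuous_re.comp continuous_fst) continuous_const
  have c2 : IsClosed {p : Quaternion ℝ × Quaternion ℝ | ‖p.1‖ = 1} :=
    isClosed_eq (continuous_norm.comp continuous_fst) continuous_const
  have cP : ∀ g h : (Quaternion ℝ × Quaternion ℝ) → Quaternion ℝ, Continuous g → Continuous h →
      Continuous fun p => auxP (g p) (h p) := by
    intro g h hg hh
    unfold auxP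
    exact ((Quaternion.continuous_coe.comp (Quaternion.continuous_re.comp hh)).sub
      ((Quaternion.continuous_re.comp ((hh.mul hg))).smul hg))
  have c3 : IsClosed {p : Quaternion ℝ × Quaternion ℝ | auxP p.1 p.2 = p.2} :=
    isClosed_eq (cP _ _ continuous_fst continuous_snd) continuous_snd
  have c4 : IsClosed {p : Quaternion ℝ × Quaternion ℝ | evalAux f p.1 p.2 = 0} := by
    refine isClosed_eq ?_ continuous_const
    unfold evalAux
    exact continuous_finset_sum _ fun k _ =>
      (cP (fun p => p.1) (fun _ => f.coeff k) continuous_fst continuous_const).mul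
        ((continuous_pow k).comp continuous_snd)
  have : Zset f = ({p : Quaternion ℝ × Quaternion ℝ | p.1.re = 0} ∩
      ({p | ‖p.1‖ = 1} ∩ ({p | auxP p.1 p.2 = p.2} ∩ {p | evalAux f p.1 p.2 = 0}))) := rfl
  rw [this]
  exact c1.inter (c2.inter (c3.inter c4))

lemma isCompact_Zset (f : Polynomial (Quaternion ℝ)) (hmonic : f.Monic)
    (hn : 1 ≤ f.natDegree) : IsCompact (Zset f) := by
  have hR : True := trivial
  have hsub : Zset f ⊆ Metric.closedBall 0 1 ×ˢ Metric.closedBall 0 (1 + ∑ k ∈ Finset.range f.natDegree, ‖f.coeff k‖) := by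
    rintro ⟨I, r⟩ ⟨h0, h1, hCI, hev⟩
    constructor
    · simpa [mem_closedBall_zero_iff] using le_of_eq h1
    · simp only [mem_closedBall_zero_iff]
      have hdeg := natDegree_polyProj I f hmonic
      have heval : Polynomial.eval r (polyProj I f) = 0 := by
        rw [← evalAux_eq f h0 h1]; exact hev
      have hdpos : 0 < (polyProj I f).natDegree := by rw [hdeg.1]; omega
      have := root_norm_le (polyProj I f) hdeg.2 hdpos heval
      refine le_trans this ?_
      rw [hdeg.1]
      gcongr
      rw [coeff_polyProj]
      exact norm_piI_le _ _
  exact IsCompact.of_isClosed_subset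
    ((isCompact_closedBall _ _).prod (isCompact_closedBall _ _)) (isClosed_Zset f) hsub

lemma finrank_HH : Module.finrank ℝ (Quaternion ℝ × Quaternion ℝ) + 1 ≤ 9 := by
  rw [Module.finrank_prod, Quaternion.finrank_eq_four]


/- Theorem 4.11 (specialized to ℍ): for a monic polynomial `f` with
`deg f ≥ 1`, the snail `sn(f)` is a compact subset of `ℍ`. -/
theorem snail_isCompact
    (f : Polynomial (Quaternion ℝ)) (hmonic : f.Monic) (hn : 1 ≤ f.natDegree) :
    IsCompact (snail f) := by
  classical
  set W : Set (Quaternion ℝ × Quaternion ℝ) :=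
    convexHull ℝ (Zset f) ∩ {p | ‖p.1‖ = 1} with hW
  have hWc : IsCompact W :=
    (isCompact_convexHull_fd (isCompact_Zset f hmonic hn)).inter_right
      (isClosed_eq (continuous_norm.comp continuous_fst) continuous_const)
  have hdegpos : ∀ I : Quaternion ℝ, 0 < (polyProj I f).natDegree := by
    intro I; rw [(natDegree_polyProj I f hmonic).1]; omega
  have himg : snail f = Prod.snd '' W := by
    apply Set.Subset.antisymm
    · intro x hx
      rw [snail] at hx
      simp only [Set.mem_iUnion] at hx
      obtain ⟨I, ⟨h0, h1⟩, hK⟩ := hx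
      rw [KSet, if_pos (hdegpos I)] at hK
      refine ⟨(I, x), ⟨?_, h1⟩, rfl⟩
      have hsub : ({I} ×ˢ {r : Quaternion ℝ | r ∈ CI I ∧
          Polynomial.eval r (polyProj I f) = 0}) ⊆ Zset f := by
        rintro ⟨J, r⟩ ⟨hJ, hr⟩
        have hJI : J = I := hJ
        refine ⟨by rw [hJI]; exact h0, by rw [hJI]; exact h1, ?_, ?_⟩
        · rw [hJI]; exact (mem_CI_iff I h0 h1 r).mp hr.1
        · rw [hJI, evalAux_eq f h0 h1]; exact hr.2
      refine convexHull_mono hsub ?_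
      exact mk_mem_convexHull_prod (by simp [convexHull_singleton]) hK
    · rintro x ⟨⟨J, y⟩, ⟨hch, hn1⟩, rfl⟩
      simp only [Set.mem_setOf_eq] at hn1
      obtain ⟨w, z, hw0, hw1, hzZ, hcomb⟩ := exists_fin_convex finrank_HH hch
      have hJ : ∑ j, w j • (z j).1 = J := by
        have := congrArg Prod.fst hcomb
        simpa [Prod.fst_sum] using this
      have hy : ∑ j, w j • (z j).2 = y := by
        have := congrArg Prod.snd hcomb
        simpa [Prod.snd_sum] using this
      have hinle : ∀ j : Fin 9, w j * ⟪(z j).1, J⟫ ≤ w j * 1 := by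
        intro j
        refine mul_le_mul_of_nonneg_left ?_ (hw0 j)
        calc ⟪(z j).1, J⟫ ≤ ‖(z j).1‖ * ‖J‖ := real_inner_le_norm _ _
          _ = 1 := by rw [(hzZ j).2.1, hn1, one_mul]
      have hsum1 : ∑ j, w j * ⟪(z j).1, J⟫ = ∑ j, w j * 1 := by
        have h1 : ∑ j : Fin 9, w j * ⟪(z j).1, J⟫ = ⟪∑ j : Fin 9, w j • (z j).1, J⟫ := by
          rw [sum_inner]
          exact Finset.sum_congr rfl fun j _ => (real_inner_smul_left _ _ _).symm
        rw [h1, hJ, real_inner_self_eq_norm_mul_norm, hn1, one_mul]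
        simp [hw1]
      have heq : ∀ j ∈ Finset.univ, w j * ⟪(z j).1, J⟫ = w j * 1 :=
        (Finset.sum_eq_sum_iff_of_le fun j _ => hinle j).mp hsum1
      have hfix : ∀ j : Fin 9, w j ≠ 0 → (z j).1 = J := by
        intro j hj
        have h2 : ⟪(z j).1, J⟫ = ‖(z j).1‖ * ‖J‖ := by
          rw [(hzZ j).2.1, hn1, one_mul]
          exact mul_left_cancel₀ hj (heq j (Finset.mem_univ j))
        have h3 := inner_eq_norm_mul_iff_real.mp h2
        rwa [(hzZ j).2.1, hn1, one_smul, one_smul] at h3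
      obtain ⟨j₀, -, hj₀⟩ : ∃ j ∈ Finset.univ, w j ≠ 0 :=
        Finset.exists_ne_zero_of_sum_ne_zero (by rw [hw1]; norm_num)
      have hJ0 : J.re = 0 := by rw [← hfix j₀ hj₀]; exact (hzZ j₀).1
      rw [snail]
      simp only [Set.mem_iUnion]
      refine ⟨J, ⟨hJ0, hn1⟩, ?_⟩
      rw [KSet, if_pos (hdegpos J)]
      set t : Finset (Fin 9) := Finset.univ.filter (fun j => w j ≠ 0) with ht
      have hy2 : ∑ j ∈ t, w j • (z j).2 = y := by
        rw [← hy, ht]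
        exact Finset.sum_filter_of_ne fun j _ hne => by
          intro h; apply hne; rw [h, zero_smul]
      have hw1' : ∑ j ∈ t, w j = 1 := by rw [ht, Finset.sum_filter_ne_zero, hw1]
      rw [← hy2]
      refine (convex_convexHull ℝ _).sum_mem (fun j _ => hw0 j) hw1' ?_
      intro j hj
      have hjne : w j ≠ 0 := (Finset.mem_filter.mp hj).2
      have h1 := hfix j hjne
      obtain ⟨hz0, hz1, hzCI, hzev⟩ := hzZ j
      rw [h1] at hzCI hzev
      refine subset_convexHull ℝ _ ?_
      exact ⟨(mem_CI_iff J hJ0 hn1 _).mpr hzCI, by rw [← evalAux_eq f hJ0 hn1]; exact hzev⟩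
  rw [himg]
  exact hWc.image continuous_snd
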